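/- Let n ≥ 1 and m ≥ 1, let e = (e_1,…,e_n) be in I_n and f = (f_1,…,f_m) be in I_m, and set k = maxid(e) and ℓ = maxid(f). Define g = (g_1,…,g_{n+m}) = (e_1,…,e_k, e_k+f_1,…,e_k+f_m, e_{k+1},…,e_n). Then g is an inversion sequence of length n+m avoiding both 101 and 102 (i.e., g is in I_{n+m}), maxid(g) = k+ℓ and max(g) = e_k + f_ℓ, so that maxid(g) − max(g) = (k − e_k) + (ℓ − f_ℓ); moreover t − g_t > k − g_k for every index t with k < t ≤ n+m. -/

import Mathlib

/-- An `F`-step: `(0,1)` or `(a,b)` with `a ≥ 1` and `b ≤ 1`. -/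
def IsFStep (s : ℤ × ℤ) : Prop := s = (0, 1) ∨ (1 ≤ s.1 ∧ s.2 ≤ 1)

/-- An `F`-path: a sequence of `F`-steps whose prefix sums satisfy
`a_1 + ⋯ + a_i ≤ b_1 + ⋯ + b_i`. -/
def IsFPath (Q : List (ℤ × ℤ)) : Prop :=
  (∀ s ∈ Q, IsFStep s) ∧
  ∀ i : ℕ, ((Q.take i).map Prod.fst).sum ≤ ((Q.take i).map Prod.snd).sum

/-- The set of `F`-paths of length `n`. -/
def FPaths (n : ℕ) : Set (List (ℤ × ℤ)) := {Q | Q.length = n ∧ IsFPath Q}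

def fheight (Q : List (ℤ × ℤ)) : ℤ := (Q.map Prod.snd).sum - (Q.map Prod.fst).sum

def fnorth (Q : List (ℤ × ℤ)) : ℕ := Q.countP (fun s => decide (s = ((0 : ℤ), (1 : ℤ))))

def faone (Q : List (ℤ × ℤ)) : ℕ := Q.countP (fun s => decide (s.1 = 1))

def fbone (Q : List (ℤ × ℤ)) : ℕ := Q.countP (fun s => decide (s.2 = 1))

/-- Steps of a Schröder path. -/
inductive SStep : Type
  | u | d | h
deriving DecidableEq

/-- The width of a Schröder step. -/
def swidth : SStep → ℕ
  | .u => 1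
  | .d => 1
  | .h => 2

/-- The height-change of a Schröder step. -/
def shc : SStep → ℤ
  | .u => 1
  | .d => -1
  | .h => 0

/-- A Schröder path of semilength `n`. -/
def IsSchroder (n : ℕ) (P : List SStep) : Prop :=
  (P.map swidth).sum = 2 * n ∧ (P.map shc).sum = 0 ∧
  ∀ i : ℕ, 0 ≤ ((P.take i).map shc).sum

/-- Schröder paths of semilength `n` without triple descents. -/
def SchP (n : ℕ) : Set (List SStep) :=
  {P | IsSchroder n P ∧ ¬ [SStep.d, SStep.d, SStep.d] <:+: P}

/-- Number of `h` letters preceded by a prefix of total height-change `0`. -/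
noncomputable def scomp (P : List SStep) : ℕ :=
  Set.ncard {i : ℕ | P[i]? = some SStep.h ∧ ((P.take i).map shc).sum = 0}

/-- Number of `h` letters plus number of double descents. -/
noncomputable def shdd (P : List SStep) : ℕ :=
  P.countP (fun s => decide (s = SStep.h)) +
    Set.ncard {i : ℕ | P[i]? = some SStep.d ∧ P[i + 1]? = some SStep.d}

/-- Number of peaks `ud`. -/
noncomputable def speak (P : List SStep) : ℕ :=
  Set.ncard {i : ℕ | P[i]? = some SStep.u ∧ P[i + 1]? = some SStep.d}

/-- Steps of a bicolored Dyck path: up, red down, black down. -/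
inductive BStep : Type
  | u | dR | dB
deriving DecidableEq

/-- A restricted bicolored Dyck path of semilength `n`:
`u^{i_1} dR^{j_1} dB^{k_1} ⋯ u^{i_{ℓ-1}} dR^{j_{ℓ-1}} dB^{k_{ℓ-1}} u^{i_ℓ} dR^{j_ℓ}`
with positive `i`'s and `k`'s, `∑ i = n`, `∑ j + ∑ k = n`, and every prefix having
at least as many `u`'s as down steps. -/
def IsRBD (n : ℕ) (B : List BStep) : Prop :=
  (∃ (blocks : List (ℕ × ℕ × ℕ)) (iL jL : ℕ),
    (∀ t ∈ blocks, 1 ≤ t.1 ∧ 1 ≤ t.2.2) ∧ 1 ≤ iL ∧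
    B = (blocks.map (fun t =>
        List.replicate t.1 BStep.u ++ List.replicate t.2.1 BStep.dR ++
          List.replicate t.2.2 BStep.dB)).flatten ++
        (List.replicate iL BStep.u ++ List.replicate jL BStep.dR) ∧
    (blocks.map (fun t => t.1)).sum + iL = n ∧
    (blocks.map (fun t => t.2.1)).sum + jL + (blocks.map (fun t => t.2.2)).sum = n) ∧
  ∀ i : ℕ, (B.take i).countP (fun s => decide (s ≠ BStep.u)) ≤
    (B.take i).countP (fun s => decide (s = BStep.u))

/-- The length of the final run of red down steps. -/
def blast (B : List BStep) : ℕ := (B.reverse.takeWhile (fun s => decide (s = BStep.dR))).length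

/-- The number of double ascents `uu`. -/
noncomputable def bdasc (B : List BStep) : ℕ :=
  Set.ncard {i : ℕ | B[i]? = some BStep.u ∧ B[i + 1]? = some BStep.u}

/-- The number of occurrences of `u dB u` or `dR dB u`. -/
noncomputable def bbval (B : List BStep) : ℕ :=
  Set.ncard {i : ℕ | (B[i]? = some BStep.u ∨ B[i]? = some BStep.dR) ∧
    B[i + 1]? = some BStep.dB ∧ B[i + 2]? = some BStep.u}

/-- `π : ℕ → ℕ` encodes a permutation of `{1,…,N}`, with value `0` outside
(in particular `π 0 = 0`). -/
def IsPermOn (N : ℕ) (π : ℕ → ℕ) : Prop :=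
  Set.BijOn π (Set.Icc 1 N) (Set.Icc 1 N) ∧ ∀ i, i ∉ Set.Icc 1 N → π i = 0

/-- `π` contains the pattern given by the word `σ`. -/
def ContainsPat (N : ℕ) (π : ℕ → ℕ) (σ : List ℕ) : Prop :=
  ∃ f : Fin σ.length → ℕ, StrictMono f ∧ (∀ t, f t ∈ Set.Icc 1 N) ∧
    ∀ s t : Fin σ.length, π (f s) < π (f t) ↔ σ.get s < σ.get t

/-- Permutations of `{1,…,N}` avoiding the patterns `2341`, `2431` and `3241`. -/
def PermSet (N : ℕ) : Set (ℕ → ℕ) :=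
  {π | IsPermOn N π ∧ ¬ContainsPat N π [2, 3, 4, 1] ∧ ¬ContainsPat N π [2, 4, 3, 1] ∧
    ¬ContainsPat N π [3, 2, 4, 1]}

/-- `block(π)`: the number of `j ∈ {1,…,N}` with `{π(1),…,π(j)} = {1,…,j}`. -/
noncomputable def blockStat (N : ℕ) (π : ℕ → ℕ) : ℕ :=
  Set.ncard {j : ℕ | 1 ≤ j ∧ j ≤ N ∧ π '' Set.Icc 1 j = Set.Icc 1 j}

/-- `asc(π)`: the number of ascents of `π`. -/
noncomputable def ascStat (N : ℕ) (π : ℕ → ℕ) : ℕ :=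
  Set.ncard {i : ℕ | 1 ≤ i ∧ i + 1 ≤ N ∧ π i < π (i + 1)}

/-- `crit(π)`: the number of critical entries of `π`. -/
noncomputable def critStat (N : ℕ) (π : ℕ → ℕ) : ℕ :=
  Set.ncard {i : ℕ | 1 ≤ i ∧ i ≤ N ∧ ∀ j k : ℕ, 1 ≤ j → j < i → i < k → k ≤ N →
    π j < π i → π k < π i → π j < π k}

/-- An inversion sequence: `0 ≤ e_i < i` (1-indexed). -/
def IsInvSeq (e : List ℕ) : Prop := ∀ i : Fin e.length, e.get i < i.val + 1

/-- `e` contains the pattern `101`. -/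
def Contains101 (e : List ℕ) : Prop :=
  ∃ i j k : Fin e.length, i < j ∧ j < k ∧ e.get j < e.get i ∧ e.get i = e.get k

/-- `e` contains the pattern `102`. -/
def Contains102 (e : List ℕ) : Prop :=
  ∃ i j k : Fin e.length, i < j ∧ j < k ∧ e.get j < e.get i ∧ e.get i < e.get k

/-- `e` contains the pattern `021`. -/
def Contains021 (e : List ℕ) : Prop :=
  ∃ i j k : Fin e.length, i < j ∧ j < k ∧ e.get i < e.get k ∧ e.get k < e.get j

/-- Inversion sequences of length `n` avoiding `101` and `102`. -/
def ISet (n : ℕ) : Set (List ℕ) :=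
  {e | e.length = n ∧ IsInvSeq e ∧ ¬Contains101 e ∧ ¬Contains102 e}

/-- Inversion sequences of length `n` avoiding `101` and `021`. -/
def JSet (n : ℕ) : Set (List ℕ) :=
  {e | e.length = n ∧ IsInvSeq e ∧ ¬Contains101 e ∧ ¬Contains021 e}

/-- The largest entry of `e` (`0` for the empty sequence). -/
def maxVal (e : List ℕ) : ℕ := e.foldr max 0

/-- The largest (1-indexed) position of the maximal entry of `e`. -/
def maxid (e : List ℕ) : ℕ := e.length - e.reverse.idxOf (maxVal e)

/-- `e` with the entry at position `maxid e` removed. -/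
def ehat (e : List ℕ) : List ℕ := e.eraseIdx (maxid e - 1)

/-- `omi(e)`: the number of `i ∈ {1,…,n}` not occurring as an entry of `e`. -/
noncomputable def omi (e : List ℕ) : ℕ := Set.ncard {i : ℕ | 1 ≤ i ∧ i ≤ e.length ∧ i ∉ e}

/-- `cons(e)`: the number of `i ∈ {1,…,n-1}` such that both `i-1` and `i` occur in `e`. -/
noncomputable def consStat (e : List ℕ) : ℕ :=
  Set.ncard {i : ℕ | 1 ≤ i ∧ i + 1 ≤ e.length ∧ (i - 1) ∈ e ∧ i ∈ e}

/-- `first(e)`: the length of the initial run of zeros of `e`. -/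
def firstStat (e : List ℕ) : ℕ := (e.takeWhile (fun v => decide (v = 0))).length

/-- `single(e)`: the number of positive integers occurring exactly once in `e`. -/
noncomputable def singleStat (e : List ℕ) : ℕ := Set.ncard {v : ℕ | 1 ≤ v ∧ e.count v = 1}

/-- The binomial coefficient `C(p,q)`, interpreted as `0` unless `0 ≤ q ≤ p`. -/
def C (p q : ℤ) : ℤ := if 0 ≤ q ∧ q ≤ p then (p.toNat.choose q.toNat : ℤ) else 0


section Aux

lemma le_maxVal {e : List ℕ} {v : ℕ} (h : v ∈ e) : v ≤ maxVal e := by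
  induction e with
  | nil => simp at h
  | cons a t ih =>
    rcases List.mem_cons.1 h with rfl | h
    · exact le_max_left _ _
    · exact le_trans (ih h) (le_max_right _ _)

lemma maxVal_mem {e : List ℕ} (h : e ≠ []) : maxVal e ∈ e := by
  induction e with
  | nil => simp at h
  | cons a t ih =>
    by_cases ht : t = []
    · subst ht; simp [maxVal]
    · have he : maxVal (a :: t) = max a (maxVal t) := rfl
      rcases max_choice a (maxVal t) with h1 | h1
      · rw [he, h1]; exact List.mem_cons_self
      · rw [he, h1]; exact List.mem_cons_of_mem _ (ih ht)

lemma maxVal_le {e : List ℕ} {c : ℕ} (h : ∀ v ∈ e, v ≤ c) : maxVal e ≤ c := by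
  induction e with
  | nil => exact Nat.zero_le c
  | cons a t ih =>
    exact max_le (h a (by simp)) (ih fun v hv => h v (by simp [hv]))

lemma maxid_pos {e : List ℕ} (h : e ≠ []) : 1 ≤ maxid e := by
  have hm : maxVal e ∈ e.reverse := by
    simpa using maxVal_mem h
  have := List.idxOf_lt_length_iff.2 hm
  simp only [List.length_reverse] at this
  unfold maxid
  omega

lemma maxid_le (e : List ℕ) : maxid e ≤ e.length := Nat.sub_le _ _

lemma getD_maxid {e : List ℕ} (h : e ≠ []) : e.getD (maxid e - 1) 0 = maxVal e := by
  have hm : maxVal e ∈ e.reverse := by simpa using maxVal_mem h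
  have hidx := List.idxOf_lt_length_iff.2 hm
  have hlen : e.reverse.length = e.length := List.length_reverse (as := e)
  have hpos : 0 < e.length := List.length_pos_iff.2 h
  have h1 : maxid e - 1 = e.length - 1 - List.idxOf (maxVal e) e.reverse := by
    unfold maxid; omega
  rw [h1, List.getD_eq_getElem _ _ (by omega)]
  have := List.getElem_reverse (l := e) (i := List.idxOf (maxVal e) e.reverse)
    (by simp only [List.length_reverse]; omega)
  exact this.symm.trans (List.getElem_idxOf hidx)

lemma lt_maxVal_of_maxid_le {e : List ℕ} {i : ℕ} (hi : maxid e ≤ i) (hl : i < e.length) :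
    e.getD i 0 < maxVal e := by
  have h : e ≠ [] := List.length_pos_iff.1 (by omega)
  have hm : maxVal e ∈ e.reverse := by simpa using maxVal_mem h
  have hidx := List.idxOf_lt_length_iff.2 hm
  have hlen : e.reverse.length = e.length := List.length_reverse (as := e)
  rw [List.getD_eq_getElem _ _ hl]
  have hle : e[i] ≤ maxVal e := le_maxVal (List.getElem_mem hl)
  rcases lt_or_eq_of_le hle with h' | h'
  · exact h'
  · exfalso
    have hr : e.length - 1 - i < List.idxOf (maxVal e) e.reverse := by
      unfold maxid at hi; omega
    have hne := List.not_of_lt_findIdx (p := (· == maxVal e)) (xs := e.reverse) hr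
    rw [List.getElem_reverse (by omega)] at hne
    rw [beq_eq_false_iff_ne, ne_eq] at hne
    have hb : e.length - 1 - (e.length - 1 - i) < e.length := by omega
    rw [← List.getD_eq_getElem _ 0 hb] at hne
    rw [show e.length - 1 - (e.length - 1 - i) = i from by omega] at hne
    rw [List.getD_eq_getElem _ 0 hl] at hne
    exact hne h'

lemma maxid_eq {e : List ℕ} {p : ℕ} (h1 : 1 ≤ p) (h2 : p ≤ e.length)
    (h3 : e.getD (p - 1) 0 = maxVal e)
    (h4 : ∀ i, p ≤ i → i < e.length → e.getD i 0 ≠ maxVal e) :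
    maxid e = p := by
  have hidx : List.idxOf (maxVal e) e.reverse = e.length - p := by
    show List.findIdx (· == maxVal e) e.reverse = e.length - p
    rw [List.findIdx_eq (by simp; omega)]
    constructor
    · rw [List.getElem_reverse (by simp only [List.length_reverse]; omega), beq_iff_eq,
        ← List.getD_eq_getElem _ 0 (by omega)]
      rw [show e.length - 1 - (e.length - p) = p - 1 from by omega]
      exact h3
    · intro j hj
      rw [List.getElem_reverse (by simp only [List.length_reverse]; omega), beq_eq_false_iff_ne,
        ne_eq]
      have hb : e.length - 1 - j < e.length := by omega
      rw [← List.getD_eq_getElem _ 0 hb]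
      exact h4 _ (by omega) hb
  unfold maxid
  rw [hidx]
  omega

lemma noPat {x : List ℕ} (h1 : ¬Contains101 x) (h2 : ¬Contains102 x)
    {i j t : ℕ} (hij : i < j) (hjt : j < t) (ht : t < x.length)
    (hji : x.getD j 0 < x.getD i 0) (hit : x.getD i 0 ≤ x.getD t 0) : False := by
  have hi : i < x.length := by omega
  have hj : j < x.length := by omega
  simp only [List.getD_eq_getElem _ 0, hi, hj, ht] at hji hit
  rcases lt_or_eq_of_le hit with h' | h'
  · exact h2 ⟨⟨i, hi⟩, ⟨j, hj⟩, ⟨t, ht⟩, hij, hjt, by simpa [List.get_eq_getElem] using hji,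
      by simpa [List.get_eq_getElem] using h'⟩
  · exact h1 ⟨⟨i, hi⟩, ⟨j, hj⟩, ⟨t, ht⟩, hij, hjt, by simpa [List.get_eq_getElem] using hji,
      by simpa [List.get_eq_getElem] using h'⟩

lemma mono_prefix {e : List ℕ} (h1 : ¬Contains101 e) (h2 : ¬Contains102 e)
    {i j : ℕ} (hij : i ≤ j) (hj : j < maxid e) :
    e.getD i 0 ≤ e.getD j 0 := by
  have hne : e ≠ [] := by
    intro h; rw [h] at hj; simp [maxid] at hj
  have hml := maxid_le e
  have hjlen : j < e.length := by omega
  rcases eq_or_lt_of_le hij with rfl | hij'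
  · exact le_refl _
  by_contra hlt
  push_neg at hlt
  have hmax : e.getD (maxid e - 1) 0 = maxVal e := getD_maxid hne
  have hile : e.getD i 0 ≤ maxVal e := by
    rw [List.getD_eq_getElem _ 0 (by omega)]
    exact le_maxVal (List.getElem_mem _)
  rcases eq_or_lt_of_le (show j ≤ maxid e - 1 by omega) with hj1 | hj1
  · rw [hj1, hmax] at hlt; omega
  · exact noPat h1 h2 hij' hj1 (by omega) hlt (by rw [hmax]; exact hile)

end Aux
/-- Lemma 7.1: the direct sum of `(101,102)`-avoiding inversion sequences. -/
theorem inv102_direct_sum (n m : ℕ) (hn : 1 ≤ n) (hm : 1 ≤ m) (e f : List ℕ)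
    (he : e ∈ ISet n) (hf : f ∈ ISet m)
    (k l : ℕ) (hk : k = maxid e) (hl : l = maxid f)
    (g : List ℕ)
    (hg : g = e.take k ++ f.map (fun v => e.getD (k - 1) 0 + v) ++ e.drop k) :
    g ∈ ISet (n + m) ∧
    maxid g = k + l ∧
    maxVal g = e.getD (k - 1) 0 + f.getD (l - 1) 0 ∧
    (maxid g : ℤ) - (maxVal g : ℤ) =
      ((k : ℤ) - (e.getD (k - 1) 0 : ℤ)) + ((l : ℤ) - (f.getD (l - 1) 0 : ℤ)) ∧
    ∀ t : ℕ, k < t → t ≤ n + m →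
      (k : ℤ) - (g.getD (k - 1) 0 : ℤ) < (t : ℤ) - (g.getD (t - 1) 0 : ℤ) := by
  obtain ⟨hel, heinv, he101, he102⟩ := he
  obtain ⟨hfl, hfinv, hf101, hf102⟩ := hf
  have hene : e ≠ [] := fun h => by rw [h] at hel; simp at hel; omega
  have hfne : f ≠ [] := fun h => by rw [h] at hfl; simp at hfl; omega
  have hk1 : 1 ≤ k := by rw [hk]; exact maxid_pos hene
  have hkn : k ≤ n := by rw [hk, ← hel]; exact maxid_le e
  have hl1 : 1 ≤ l := by rw [hl]; exact maxid_pos hfne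
  have hlm : l ≤ m := by rw [hl, ← hfl]; exact maxid_le f
  set a := e.getD (k - 1) 0 with ha
  set b := f.getD (l - 1) 0 with hb
  have hamax : a = maxVal e := by rw [ha, hk]; exact getD_maxid hene
  have hbmax : b = maxVal f := by rw [hb, hl]; exact getD_maxid hfne
  have hEle : ∀ i, i < n → e.getD i 0 ≤ a := by
    intro i hi
    rw [hamax, List.getD_eq_getElem _ 0 (by omega)]
    exact le_maxVal (List.getElem_mem _)
  have hElt : ∀ i, k ≤ i → i < n → e.getD i 0 < a := by
    intro i h1 h2
    rw [hamax]
    exact lt_maxVal_of_maxid_le (by rw [← hk]; exact h1) (by omega)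
  have hEinv : ∀ i, i < n → e.getD i 0 < i + 1 := by
    intro i hi
    rw [List.getD_eq_getElem _ 0 (by omega)]
    exact heinv ⟨i, by omega⟩
  have hEmono : ∀ i j, i ≤ j → j < k → e.getD i 0 ≤ e.getD j 0 := by
    intro i j h1 h2
    exact mono_prefix he101 he102 h1 (by rw [← hk]; exact h2)
  have hFle : ∀ i, i < m → f.getD i 0 ≤ b := by
    intro i hi
    rw [hbmax, List.getD_eq_getElem _ 0 (by omega)]
    exact le_maxVal (List.getElem_mem _)
  have hFlt : ∀ i, l ≤ i → i < m → f.getD i 0 < b := by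
    intro i h1 h2
    rw [hbmax]
    exact lt_maxVal_of_maxid_le (by rw [← hl]; exact h1) (by omega)
  have hFinv : ∀ i, i < m → f.getD i 0 < i + 1 := by
    intro i hi
    rw [List.getD_eq_getElem _ 0 (by omega)]
    exact hfinv ⟨i, by omega⟩
  have htl : (e.take k).length = k := by rw [List.length_take, hel]; omega
  have hml : (f.map (fun v => a + v)).length = m := by simp [hfl]
  have html : (e.take k ++ f.map (fun v => a + v)).length = k + m := by
    rw [List.length_append, htl, hml]
  have hgl : g.length = n + m := by
    rw [hg, List.length_append, html, List.length_drop, hel]; omega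
  have hG1 : ∀ i, i < k → g.getD i 0 = e.getD i 0 := by
    intro i hi
    rw [hg, List.getD_append _ _ _ _ (by rw [html]; omega),
      List.getD_append _ _ _ _ (by rw [htl]; omega),
      List.getD_eq_getElem _ 0 (by rw [htl]; omega), List.getElem_take,
      ← List.getD_eq_getElem _ 0 (by omega)]
  have hG2 : ∀ i, k ≤ i → i < k + m → g.getD i 0 = a + f.getD (i - k) 0 := by
    intro i h1 h2
    rw [hg, List.getD_append _ _ _ _ (by rw [html]; omega),
      List.getD_append_right _ _ _ _ (by rw [htl]; omega), htl,
      List.getD_eq_getElem _ 0 (by rw [hml]; omega), List.getElem_map,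
      ← List.getD_eq_getElem _ 0 (by omega)]
  have hG3 : ∀ i, k + m ≤ i → i < n + m → g.getD i 0 = e.getD (i - m) 0 := by
    intro i h1 h2
    rw [hg, List.getD_append_right _ _ _ _ (by rw [html]; omega), html,
      List.getD_eq_getElem _ 0 (by rw [List.length_drop, hel]; omega),
      List.getElem_drop, ← List.getD_eq_getElem _ 0 (by omega),
      show k + (i - (k + m)) = i - m from by omega]
  -- key pattern-avoidance for g
  have hgkey : ∀ i j t : ℕ, i < j → j < t → t < n + m →
      g.getD j 0 < g.getD i 0 → g.getD i 0 ≤ g.getD t 0 → False := by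
    intro i j t hij hjt htn hji hit
    rcases lt_or_ge j k with hjk | hjk
    · -- j in first block
      rw [hG1 i (by omega), hG1 j hjk] at hji
      exact absurd (hEmono i j (by omega) hjk) (by omega)
    rcases lt_or_ge j (k + m) with hjm | hjm
    · -- j in middle block
      rcases lt_or_ge i k with hik | hik
      · rw [hG1 i hik, hG2 j hjk hjm] at hji
        have := hEle i (by omega)
        omega
      · rw [hG2 i hik (by omega), hG2 j hjk hjm] at hji
        rcases lt_or_ge t (k + m) with htm | htm
        · rw [hG2 i hik (by omega), hG2 t (by omega) htm] at hit
          exact noPat hf101 hf102 (show i - k < j - k by omega)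
            (show j - k < t - k by omega) (show t - k < f.length by omega)
            (by omega) (by omega)
        · rw [hG2 i hik (by omega), hG3 t htm htn] at hit
          have := hElt (t - m) (by omega) (by omega)
          omega
    · -- j in last block; then t also
      have htm : k + m ≤ t := by omega
      rw [hG3 j hjm (by omega)] at hji
      rw [hG3 t htm htn] at hit
      rcases lt_or_ge i k with hik | hik
      · rw [hG1 i hik] at hji hit
        exact noPat he101 he102 (show i < j - m by omega)
          (show j - m < t - m by omega) (show t - m < e.length by omega)
          hji hit
      rcases lt_or_ge i (k + m) with him | him
      · rw [hG2 i hik him] at hji hit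
        have := hElt (t - m) (by omega) (by omega)
        omega
      · rw [hG3 i him (by omega)] at hji hit
        exact noPat he101 he102 (show i - m < j - m by omega)
          (show j - m < t - m by omega) (show t - m < e.length by omega)
          hji hit
  have hGval : ∀ i, i < n + m → g.getD i 0 ≤ a + b := by
    intro i hi
    rcases lt_or_ge i k with h1 | h1
    · rw [hG1 i h1]; have := hEle i (by omega); omega
    rcases lt_or_ge i (k + m) with h2 | h2
    · rw [hG2 i h1 h2]; have := hFle (i - k) (by omega); omega
    · rw [hG3 i h2 hi]; have := hEle (i - m) (by omega); omega
  have hGmax : g.getD (k + l - 1) 0 = a + b := by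
    rw [hG2 (k + l - 1) (by omega) (by omega), show k + l - 1 - k = l - 1 from by omega, ← hb]
  have hmaxval : maxVal g = a + b := by
    apply le_antisymm
    · apply maxVal_le
      intro v hv
      obtain ⟨i, hi, rfl⟩ := List.mem_iff_getElem.1 hv
      rw [← List.getD_eq_getElem _ 0 hi]
      exact hGval i (by omega)
    · rw [← hGmax, List.getD_eq_getElem _ 0 (by omega)]
      exact le_maxVal (List.getElem_mem _)
  have hmaxid : maxid g = k + l := by
    apply maxid_eq (by omega) (by omega)
    · rw [hGmax, hmaxval]
    · intro i h1 h2
      rw [hmaxval]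
      rcases lt_or_ge i (k + m) with h3 | h3
      · rw [hG2 i (by omega) h3]
        have := hFlt (i - k) (by omega) (by omega)
        omega
      · rw [hG3 i h3 (by omega)]
        have := hElt (i - m) (by omega) (by omega)
        omega
  have hgmem : g ∈ ISet (n + m) := by
    refine ⟨hgl, ?_, ?_, ?_⟩
    · intro ii
      obtain ⟨i, hi⟩ := ii
      have hi' : i < n + m := by omega
      simp only [List.get_eq_getElem, Fin.val_mk]
      rw [← List.getD_eq_getElem _ 0 hi]
      rcases lt_or_ge i k with h1 | h1
      · rw [hG1 i h1]; exact hEinv i (by omega)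
      rcases lt_or_ge i (k + m) with h2 | h2
      · rw [hG2 i h1 h2]
        have h3 := hEinv (k - 1) (by omega)
        have h4 := hFinv (i - k) (by omega)
        omega
      · rw [hG3 i h2 hi']
        have := hEinv (i - m) (by omega)
        omega
    · rintro ⟨i, j, t, h1, h2, h3, h4⟩
      refine hgkey i j t h1 h2 (by omega)
        (by simp only [List.get_eq_getElem] at h3
            rw [← List.getD_eq_getElem _ 0 j.isLt, ← List.getD_eq_getElem _ 0 i.isLt] at h3
            exact h3)
        (by simp only [List.get_eq_getElem] at h4
            rw [← List.getD_eq_getElem _ 0 i.isLt, ← List.getD_eq_getElem _ 0 t.isLt] at h4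
            exact le_of_eq h4)
    · rintro ⟨i, j, t, h1, h2, h3, h4⟩
      refine hgkey i j t h1 h2 (by omega)
        (by simp only [List.get_eq_getElem] at h3
            rw [← List.getD_eq_getElem _ 0 j.isLt, ← List.getD_eq_getElem _ 0 i.isLt] at h3
            exact h3)
        (by simp only [List.get_eq_getElem] at h4
            rw [← List.getD_eq_getElem _ 0 i.isLt, ← List.getD_eq_getElem _ 0 t.isLt] at h4
            exact le_of_lt h4)
  refine ⟨hgmem, hmaxid, hmaxval, ?_, ?_⟩
  · rw [hmaxid, hmaxval]; push_cast; ring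
  · intro t ht htn
    rw [hG1 (k - 1) (by omega)]
    rw [← ha]
    rcases lt_or_ge (t - 1) (k + m) with h1 | h1
    · rw [hG2 (t - 1) (by omega) h1]
      have := hFinv (t - 1 - k) (by omega)
      push_cast
      omega
    · rw [hG3 (t - 1) h1 (by omega)]
      have := hElt (t - 1 - m) (by omega) (by omega)
      omega
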